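/- Let K ≥ 3, τ ∈ ℝ, and let (μ_k)_{k=1}^K be a concave sequence of reals with μ_k ≠ τ for all k and with μ_l > τ for at least one l; set Δ_k = |μ_k − τ| and Δ_min = min_{k∈[K]} Δ_k. Then there exists a sequence of reals (μ'_k)_{k=1}^K, with gaps Δ'_k = |μ'_k − τ|, such that: (a) (μ'_k)_{k=1}^K is concave; (b) there exists k ∈ [K] with sign(μ_k − τ) ≠ sign(μ'_k − τ); (c) for all k ∈ [K], |μ'_k − μ_k| ≤ 3·Δ_min; and (d) for all k ∈ [K], Δ_k/10 ≤ Δ'_k ≤ 3·Δ_k. -/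
import Mathlib

/-- A finite sequence `(μ_k)_{k=1}^K` is concave if `μ_{k-1} + μ_{k+1} ≤ 2 μ_k`
for all `1 < k < K` (here stated with 0-based indices). -/
def ConcaveSeq {K : ℕ} (μ : Fin K → ℝ) : Prop :=
  ∀ (i : ℕ) (h : i + 2 < K),
    μ ⟨i, by omega⟩ + μ ⟨i + 2, h⟩ ≤ 2 * μ ⟨i + 1, by omega⟩


namespace CP

variable {K : ℕ} {f : ℕ → ℝ} {τ ε : ℝ}

theorem sign_ne_of_mul_neg {x y : ℝ} (h : x * y < 0) : Real.sign x ≠ Real.sign y := by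
  rcases lt_trichotomy x 0 with hx | hx | hx
  · have hy : 0 < y := by nlinarith
    rw [Real.sign_of_neg hx, Real.sign_of_pos hy]; norm_num
  · rw [hx, zero_mul] at h; exact absurd h (lt_irrefl 0)
  · have hy : y < 0 := by nlinarith
    rw [Real.sign_of_pos hx, Real.sign_of_neg hy]; norm_num

theorem incr_mono (hcf : ∀ i, i + 2 < K → f i + f (i + 2) ≤ 2 * f (i + 1))
    {i j : ℕ} (hij : i ≤ j) : j + 1 < K → f (j + 1) - f j ≤ f (i + 1) - f i := by
  induction j, hij using Nat.le_induction with
  | base => intro _; exact le_rfl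
  | succ n hn ih =>
    intro h
    have h1 := hcf n (by omega)
    have h2 := ih (by omega)
    have h3 : f (n + 1 + 1) = f (n + 2) := rfl
    linarith

theorem chord_right (hcf : ∀ i, i + 2 < K → f i + f (i + 2) ≤ 2 * f (i + 1))
    {r k : ℕ} (hrk : r ≤ k) (hrK : r + 1 < K) :
    k < K → f k ≤ f r + ((k : ℝ) - r) * (f (r + 1) - f r) := by
  induction k, hrk using Nat.le_induction with
  | base => intro _; simp
  | succ n hn ih =>
    intro h
    have h1 : f (n + 1) - f n ≤ f (r + 1) - f r := incr_mono hcf hn (by omega)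
    have h2 := ih (by omega)
    have h3 : f r + (((n:ℝ) + 1) - r) * (f (r + 1) - f r)
        = (f r + ((n:ℝ) - r) * (f (r + 1) - f r)) + (f (r + 1) - f r) := by ring
    push_cast
    linarith

theorem chord_left (hcf : ∀ i, i + 2 < K → f i + f (i + 2) ≤ 2 * f (i + 1))
    {r k : ℕ} (hkr : k ≤ r) : r + 1 < K → f k ≤ f r + ((k : ℝ) - r) * (f (r + 1) - f r) := by
  induction r, hkr using Nat.le_induction with
  | base => intro _; simp
  | succ n hn ih =>
    intro h
    have ihh := ih (by omega)
    have h1 := hcf n (by omega)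
    have hk : (k : ℝ) ≤ (n : ℝ) := by exact_mod_cast hn
    rw [show f (n + 1 + 1) = f (n + 2) from rfl]
    have e3 : ((k:ℝ) - ((n:ℝ) + 1)) * (f (n + 1) - f n)
        ≤ ((k:ℝ) - ((n:ℝ) + 1)) * (f (n + 2) - f (n + 1)) := by
      have hd : f (n + 2) - f (n + 1) ≤ f (n + 1) - f n := by linarith
      have hcoef : (k:ℝ) - ((n:ℝ) + 1) ≤ 0 := by linarith
      nlinarith
    have e5 : f n + ((k:ℝ) - (n:ℝ)) * (f (n + 1) - f n)
        = f (n + 1) + ((k:ℝ) - ((n:ℝ) + 1)) * (f (n + 1) - f n) := by ring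
    push_cast
    linarith

theorem below_up (hcf : ∀ i, i + 2 < K → f i + f (i + 2) ≤ 2 * f (i + 1)) (hε : 0 < ε)
    {u j : ℕ} (huj : u < j) (hjK : j + 1 < K)
    (hjb : ε ≤ τ - f j) (hja : ε ≤ f (j + 1) - τ) : 3 * ε ≤ τ - f u := by
  have hc := chord_left hcf (le_of_lt huj) hjK
  have h1 : (u : ℝ) + 1 ≤ (j : ℝ) := by exact_mod_cast huj
  have h3 : 1 * (f (j + 1) - f j) ≤ ((j : ℝ) - u) * (f (j + 1) - f j) :=
    mul_le_mul_of_nonneg_right (by linarith) (by linarith)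
  have heq : f j + ((u:ℝ) - j) * (f (j + 1) - f j)
      = f j - ((j:ℝ) - u) * (f (j + 1) - f j) := by ring
  linarith

theorem below_down (hcf : ∀ i, i + 2 < K → f i + f (i + 2) ≤ 2 * f (i + 1)) (hε : 0 < ε)
    {u j : ℕ} (hju : j + 1 < u) (huK : u < K)
    (hja : ε ≤ f j - τ) (hjb : ε ≤ τ - f (j + 1)) : 3 * ε ≤ τ - f u := by
  have hc := chord_right hcf (show j ≤ u by omega) (by omega) huK
  have h1 : (j : ℝ) + 2 ≤ (u : ℝ) := by exact_mod_cast (show j + 2 ≤ u by omega)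
  have h3 : 1 * (-(f (j + 1) - f j)) ≤ ((u:ℝ) - j - 1) * (-(f (j + 1) - f j)) :=
    mul_le_mul_of_nonneg_right (by linarith) (by linarith)
  have heq : f j + ((u:ℝ) - j) * (f (j + 1) - f j)
      = f (j + 1) - ((u:ℝ) - j - 1) * (-(f (j + 1) - f j)) := by ring
  linarith

theorem cross_up (hne' : ∀ i, i < K → f i ≠ τ) {a b : ℕ} (hbK : b < K) (hab : a < b)
    (ha : f a < τ) (hb : τ < f b) :
    ∃ j, a ≤ j ∧ j + 1 ≤ b ∧ f j < τ ∧ τ < f (j + 1) := by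
  classical
  set S := (Finset.range b).filter (fun i => a ≤ i ∧ f i < τ) with hS
  have hSne : S.Nonempty := ⟨a, by simp [hS, hab, ha]⟩
  set j := S.max' hSne with hj
  have hjS : j ∈ S := S.max'_mem hSne
  rw [hS, Finset.mem_filter, Finset.mem_range] at hjS
  refine ⟨j, hjS.2.1, by omega, hjS.2.2, ?_⟩
  by_cases h : j + 1 = b
  · rw [h]; exact hb
  · have hjb1 : j + 1 < b := by omega
    rcases lt_or_gt_of_ne (hne' (j + 1) (by omega)) with h2 | h2
    · exfalso
      have hmem : j + 1 ∈ S := by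
        rw [hS, Finset.mem_filter, Finset.mem_range]
        exact ⟨hjb1, by omega, h2⟩
      have := S.le_max' _ hmem
      rw [← hj] at this
      omega
    · exact h2

theorem cross_down (hne' : ∀ i, i < K → f i ≠ τ) {a b : ℕ} (hbK : b < K) (hab : a < b)
    (ha : τ < f a) (hb : f b < τ) :
    ∃ j, a ≤ j ∧ j + 1 ≤ b ∧ τ < f j ∧ f (j + 1) < τ := by
  classical
  set S := (Finset.range b).filter (fun i => a ≤ i ∧ τ < f i) with hS
  have hSne : S.Nonempty := ⟨a, by simp [hS, hab, ha]⟩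
  set j := S.max' hSne with hj
  have hjS : j ∈ S := S.max'_mem hSne
  rw [hS, Finset.mem_filter, Finset.mem_range] at hjS
  refine ⟨j, hjS.2.1, by omega, hjS.2.2, ?_⟩
  by_cases h : j + 1 = b
  · rw [h]; exact hb
  · have hjb1 : j + 1 < b := by omega
    rcases lt_or_gt_of_ne (hne' (j + 1) (by omega)) with h2 | h2
    · exact h2
    · exfalso
      have hmem : j + 1 ∈ S := by
        rw [hS, Finset.mem_filter, Finset.mem_range]
        exact ⟨hjb1, by omega, h2⟩
      have := S.le_max' _ hmem
      rw [← hj] at this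
      omega



variable {K : ℕ} {f : ℕ → ℝ} {τ ε : ℝ}


theorem no_three_small (hcf : ∀ i, i + 2 < K → f i + f (i + 2) ≤ 2 * f (i + 1))
    (hne' : ∀ i, i < K → f i ≠ τ)
    (hblw : ∀ k, k < K → f k < τ → ε ≤ τ - f k)
    (habv : ∀ k, k < K → τ < f k → ε ≤ f k - τ)
    (hε : 0 < ε)
    {p u v w : ℕ} (hpK : p < K) (hpa : τ < f p)
    (huv : u < v) (hvw : v < w) (hwK : w < K)
    (hub : f u < τ) (hvb : f v < τ) (hwb : f w < τ)
    (hu3 : τ - f u < 3 * ε) (hv3 : τ - f v < 3 * ε) (hw3 : τ - f w < 3 * ε) : False := by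
  have hvK : v < K := by omega
  have hpv : p ≠ v := by rintro rfl; linarith
  rcases lt_or_gt_of_ne hpv with hpv' | hpv'
  · -- p < v
    obtain ⟨j, hj1, hj2, hj3, hj4⟩ := cross_down hne' hvK hpv' hpa hvb
    have hj5 : j + 1 = v := by
      by_contra hcc
      have hlt : j + 1 < v := by omega
      have := below_down hcf hε hlt hvK (habv j (by omega) hj3) (hblw (j+1) (by omega) hj4)
      linarith
    obtain ⟨j', h'1, h'2, h'3, h'4⟩ := cross_down hne' hwK (show j < w by omega) hj3 hwb
    have hj'5 : j' + 1 = w := by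
      by_contra hcc
      have hlt : j' + 1 < w := by omega
      have := below_down hcf hε hlt hwK (habv j' (by omega) h'3) (hblw (j'+1) (by omega) h'4)
      linarith
    have hvj' : v < j' := by
      rcases Nat.lt_or_ge v j' with h | h
      · exact h
      · exfalso
        have hvj : v = j' := by omega
        rw [hvj] at hvb; linarith
    obtain ⟨j'', h''1, h''2, h''3, h''4⟩ := cross_up hne' (show j' < K by omega) hvj' hvb h'3
    have hj''5 : j'' = v := by
      by_contra hcc
      have hlt : v < j'' := by omega
      have := below_up hcf hε hlt (show j'' + 1 < K by omega)
        (hblw j'' (by omega) h''3) (habv (j''+1) (by omega) h''4)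
      linarith
    have hccv := hcf (v-1) (show v - 1 + 2 < K by omega)
    rw [show v - 1 + 1 = v by omega, show v - 1 + 2 = v + 1 by omega] at hccv
    have hA : τ < f (v-1) := by rw [show v - 1 = j by omega]; exact hj3
    have hBv : τ < f (v+1) := by rw [show v + 1 = j'' + 1 by omega]; exact h''4
    linarith
  · -- v < p
    obtain ⟨j, hj1, hj2, hj3, hj4⟩ := cross_up hne' hpK hpv' hvb hpa
    have hj5 : j = v := by
      by_contra hcc
      have hlt : v < j := by omega
      have := below_up hcf hε hlt (show j + 1 < K by omega)
        (hblw j (by omega) hj3) (habv (j+1) (by omega) hj4)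
      linarith
    have hfv1 : τ < f (v + 1) := by rw [show v + 1 = j + 1 by omega]; exact hj4
    obtain ⟨j', h'1, h'2, h'3, h'4⟩ := cross_up hne' (show v + 1 < K by omega)
      (show u < v + 1 by omega) hub hfv1
    have hj'5 : j' = u := by
      by_contra hcc
      have hlt : u < j' := by omega
      have := below_up hcf hε hlt (show j' + 1 < K by omega)
        (hblw j' (by omega) h'3) (habv (j'+1) (by omega) h'4)
      linarith
    have hfu1 : τ < f (u + 1) := by rw [show u + 1 = j' + 1 by omega]; exact h'4
    have huv1 : u + 1 < v := by
      rcases Nat.eq_or_lt_of_le (show u + 1 ≤ v from huv) with h | h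
      · exfalso; rw [h] at hfu1; linarith
      · exact h
    obtain ⟨j'', h''1, h''2, h''3, h''4⟩ := cross_down hne' hvK huv1 hfu1 hvb
    have hj''5 : j'' + 1 = v := by
      by_contra hcc
      have hlt : j'' + 1 < v := by omega
      have := below_down hcf hε hlt hvK (habv j'' (by omega) h''3) (hblw (j''+1) (by omega) h''4)
      linarith
    have hccv := hcf (v-1) (show v - 1 + 2 < K by omega)
    rw [show v - 1 + 1 = v by omega, show v - 1 + 2 = v + 1 by omega] at hccv
    have hA : τ < f (v-1) := by rw [show v - 1 = j'' by omega]; exact h''3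
    linarith

theorem no_three_small' (hcf : ∀ i, i + 2 < K → f i + f (i + 2) ≤ 2 * f (i + 1))
    (hne' : ∀ i, i < K → f i ≠ τ)
    (hblw : ∀ k, k < K → f k < τ → ε ≤ τ - f k)
    (habv : ∀ k, k < K → τ < f k → ε ≤ f k - τ)
    (hε : 0 < ε)
    {p : ℕ} (hpK : p < K) (hpa : τ < f p)
    {x y z : ℕ} (hxy : x ≠ y) (hxz : x ≠ z) (hyz : y ≠ z)
    (hxK : x < K) (hyK : y < K) (hzK : z < K)
    (hxb : f x < τ) (hyb : f y < τ) (hzb : f z < τ)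
    (hx3 : τ - f x < 3*ε) (hy3 : τ - f y < 3*ε) (hz3 : τ - f z < 3*ε) : False := by
  rcases Nat.lt_trichotomy x y with h1 | h1 | h1
  · rcases Nat.lt_trichotomy y z with h2 | h2 | h2
    · exact no_three_small hcf hne' hblw habv hε hpK hpa h1 h2 hzK hxb hyb hzb hx3 hy3 hz3
    · exact hyz h2
    · rcases Nat.lt_trichotomy x z with h3 | h3 | h3
      · exact no_three_small hcf hne' hblw habv hε hpK hpa h3 h2 hyK hxb hzb hyb hx3 hz3 hy3
      · exact hxz h3
      · exact no_three_small hcf hne' hblw habv hε hpK hpa h3 h1 hyK hzb hxb hyb hz3 hx3 hy3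
  · exact hxy h1
  · rcases Nat.lt_trichotomy x z with h2 | h2 | h2
    · exact no_three_small hcf hne' hblw habv hε hpK hpa h1 h2 hzK hyb hxb hzb hy3 hx3 hz3
    · exact hxz h2
    · rcases Nat.lt_trichotomy y z with h3 | h3 | h3
      · exact no_three_small hcf hne' hblw habv hε hpK hpa h3 h2 hxK hyb hzb hxb hy3 hz3 hx3
      · exact hyz h3
      · exact no_three_small hcf hne' hblw habv hε hpK hpa h3 h1 hxK hzb hyb hxb hz3 hy3 hx3



theorem spike_pack (hcf : ∀ i, i + 2 < K → f i + f (i + 2) ≤ 2 * f (i + 1)) (hε : 0 < ε)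
    {e : ℕ} (heK : e < K) (hfe : f e = τ + ε)
    (hmid : ∀ i, i + 2 < K → i + 1 ≠ e) :
    ∃ g : ℕ → ℝ,
      (∀ i, i + 2 < K → g i + g (i + 2) ≤ 2 * g (i + 1)) ∧
      (f e - τ) * (g e - τ) < 0 ∧
      (∀ k, k < K → |g k - f k| ≤ 3 * ε) ∧
      (∀ k, k < K → |f k - τ| / 10 ≤ |g k - τ| ∧ |g k - τ| ≤ 3 * |f k - τ|) := by
  classical
  refine ⟨fun i => if i = e then τ - ε else f i, ?_, ?_, ?_, ?_⟩
  · intro i h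
    have hgle : ∀ i', (if i' = e then τ - ε else f i') ≤ f i' := by
      intro i'
      by_cases h' : i' = e
      · rw [if_pos h', h', hfe]; linarith
      · rw [if_neg h']
    show (if i = e then τ - ε else f i) + (if i + 2 = e then τ - ε else f (i + 2))
        ≤ 2 * (if i + 1 = e then τ - ε else f (i + 1))
    rw [if_neg (hmid i h)]
    have := hcf i h
    linarith [hgle i, hgle (i + 2)]
  · show (f e - τ) * ((if e = e then τ - ε else f e) - τ) < 0
    rw [if_pos rfl, hfe, show (τ + ε - τ) * (τ - ε - τ) = -(ε * ε) from by ring]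
    nlinarith
  · intro k hk
    show |(if k = e then τ - ε else f k) - f k| ≤ 3 * ε
    by_cases h' : k = e
    · rw [if_pos h', h', hfe, show τ - ε - (τ + ε) = -(2*ε) from by ring, abs_neg,
        abs_of_pos (by linarith : (0:ℝ) < 2*ε)]
      linarith
    · rw [if_neg h', sub_self, abs_zero]; linarith
  · intro k hk
    by_cases h' : k = e
    · subst h'
      show |f k - τ| / 10 ≤ |(if k = k then τ - ε else f k) - τ|
          ∧ |(if k = k then τ - ε else f k) - τ| ≤ 3 * |f k - τ|
      rw [if_pos rfl, hfe, show τ + ε - τ = ε from by ring, show τ - ε - τ = -ε from by ring,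
        abs_neg, abs_of_pos hε]
      constructor <;> linarith
    · show |f k - τ| / 10 ≤ |(if k = e then τ - ε else f k) - τ|
          ∧ |(if k = e then τ - ε else f k) - τ| ≤ 3 * |f k - τ|
      rw [if_neg h']
      have := abs_nonneg (f k - τ)
      constructor <;> linarith

theorem line_pack (hcf : ∀ i, i + 2 < K → f i + f (i + 2) ≤ 2 * f (i + 1)) (hε : 0 < ε)
    {a b : ℝ} {e : ℕ} (heK : e < K)
    (hfe : f e = τ + ε) (hge : a + (e : ℝ) * b = τ - ε)
    (hchord : ∀ k, k < K → f k ≤ a + (k : ℝ) * b + 2 * ε)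
    (hside : ∀ k, k < K → k ≠ e →
      (τ + ε ≤ a + (k : ℝ) * b) ∨ (a + (k : ℝ) * b ≤ τ - 3 * ε ∧ f k ≤ τ - ε)) :
    ∃ g : ℕ → ℝ,
      (∀ i, i + 2 < K → g i + g (i + 2) ≤ 2 * g (i + 1)) ∧
      (f e - τ) * (g e - τ) < 0 ∧
      (∀ k, k < K → |g k - f k| ≤ 3 * ε) ∧
      (∀ k, k < K → |f k - τ| / 10 ≤ |g k - τ| ∧ |g k - τ| ≤ 3 * |f k - τ|) := by
  refine ⟨fun i => min (f i) (a + (i : ℝ) * b), ?_, ?_, ?_, ?_⟩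
  · intro i h
    show min (f i) (a + (i:ℝ)*b) + min (f (i+2)) (a + ((i+2:ℕ):ℝ)*b)
        ≤ 2 * min (f (i+1)) (a + ((i+1:ℕ):ℝ)*b)
    have c1 : ((i+1:ℕ):ℝ) = (i:ℝ) + 1 := by push_cast; ring
    have c2 : ((i+2:ℕ):ℝ) = (i:ℝ) + 2 := by push_cast; ring
    rw [c1, c2]
    rcases le_total (f (i+1)) (a + ((i:ℝ)+1)*b) with hm | hm
    · rw [min_eq_left hm]
      have := hcf i h
      linarith [min_le_left (f i) (a + (i:ℝ)*b), min_le_left (f (i+2)) (a + ((i:ℝ)+2)*b)]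
    · rw [min_eq_right hm]
      have key : (a + (i:ℝ)*b) + (a + ((i:ℝ)+2)*b) = 2*(a + ((i:ℝ)+1)*b) := by ring
      linarith [min_le_right (f i) (a + (i:ℝ)*b), min_le_right (f (i+2)) (a + ((i:ℝ)+2)*b)]
  · have hmin : min (f e) (a + (e:ℝ)*b) = τ - ε := by
      rw [hfe, hge]; exact min_eq_right (by linarith)
    show (f e - τ) * (min (f e) (a + (e:ℝ)*b) - τ) < 0
    rw [hmin, hfe, show (τ + ε - τ) * (τ - ε - τ) = -(ε * ε) from by ring]
    nlinarith
  · intro k hk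
    show |min (f k) (a + (k:ℝ)*b) - f k| ≤ 3 * ε
    have m1 := min_le_left (f k) (a + (k:ℝ)*b)
    have m2 : f k - 2*ε ≤ min (f k) (a + (k:ℝ)*b) :=
      le_min (by linarith) (by linarith [hchord k hk])
    rw [abs_le]
    constructor <;> linarith
  · intro k hk
    by_cases hke : k = e
    · subst hke
      have hmin : min (f k) (a + (k:ℝ)*b) = τ - ε := by
        rw [hfe, hge]; exact min_eq_right (by linarith)
      show |f k - τ| / 10 ≤ |min (f k) (a + (k:ℝ)*b) - τ|
          ∧ |min (f k) (a + (k:ℝ)*b) - τ| ≤ 3 * |f k - τ|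
      rw [hmin, hfe, show τ + ε - τ = ε from by ring, show τ - ε - τ = -ε from by ring,
        abs_neg, abs_of_pos hε]
      constructor <;> linarith
    · show |f k - τ| / 10 ≤ |min (f k) (a + (k:ℝ)*b) - τ|
          ∧ |min (f k) (a + (k:ℝ)*b) - τ| ≤ 3 * |f k - τ|
      rcases hside k hk hke with hhi | ⟨hlo, hfk⟩
      · rcases le_total (f k) (a + (k:ℝ)*b) with hm | hm
        · rw [min_eq_left hm]
          have := abs_nonneg (f k - τ)
          constructor <;> linarith
        · have h1 : |f k - τ| = f k - τ := abs_of_pos (by linarith)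
          have h2 : |min (f k) (a + (k:ℝ)*b) - τ| = a + (k:ℝ)*b - τ := by
            rw [min_eq_right hm]; exact abs_of_pos (by linarith)
          rw [h1, h2]
          constructor
          · linarith [hchord k hk]
          · linarith
      · rcases le_total (f k) (a + (k:ℝ)*b) with hm | hm
        · rw [min_eq_left hm]
          have := abs_nonneg (f k - τ)
          constructor <;> linarith
        · have h1 : |f k - τ| = τ - f k := by
            rw [abs_of_neg (by linarith : f k - τ < 0)]; ring
          have h2 : |min (f k) (a + (k:ℝ)*b) - τ| = τ - (a + (k:ℝ)*b) := by
            rw [min_eq_right hm, abs_of_neg (by linarith : a + (k:ℝ)*b - τ < 0)]; ring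
          rw [h1, h2]
          constructor
          · linarith
          · linarith [hchord k hk]

theorem shift_pack (hcf : ∀ i, i + 2 < K → f i + f (i + 2) ≤ 2 * f (i + 1)) (hε : 0 < ε)
    {c : ℝ} {M : ℕ} (hMK : M < K) (hMv : f M = τ - ε)
    (hne' : ∀ i, i < K → f i ≠ τ)
    (hc1 : 11/10 * ε ≤ c) (hc2 : c ≤ 2 * ε)
    (harm : ∀ k, k < K → f k < τ → 11/10 * (τ - f k) ≤ c ∨ c ≤ 9/10 * (τ - f k))
    (hblw : ∀ k, k < K → f k < τ → ε ≤ τ - f k)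
    (habv : ∀ k, k < K → τ < f k → ε ≤ f k - τ) :
    ∃ g : ℕ → ℝ,
      (∀ i, i + 2 < K → g i + g (i + 2) ≤ 2 * g (i + 1)) ∧
      (f M - τ) * (g M - τ) < 0 ∧
      (∀ k, k < K → |g k - f k| ≤ 3 * ε) ∧
      (∀ k, k < K → |f k - τ| / 10 ≤ |g k - τ| ∧ |g k - τ| ≤ 3 * |f k - τ|) := by
  refine ⟨fun i => f i + c, ?_, ?_, ?_, ?_⟩
  · intro i h
    show f i + c + (f (i+2) + c) ≤ 2 * (f (i+1) + c)
    have := hcf i h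
    linarith
  · show (f M - τ) * (f M + c - τ) < 0
    rw [hMv, show (τ - ε - τ) * (τ - ε + c - τ) = -(ε * (c - ε)) from by ring]
    have h1 : 0 < ε * (c - ε) := mul_pos hε (by linarith)
    linarith
  · intro k hk
    show |f k + c - f k| ≤ 3 * ε
    rw [show f k + c - f k = c from by ring, abs_of_pos (by linarith : (0:ℝ) < c)]
    linarith
  · intro k hk
    show |f k - τ| / 10 ≤ |f k + c - τ| ∧ |f k + c - τ| ≤ 3 * |f k - τ|
    rcases lt_or_gt_of_ne (hne' k hk) with hb | ha
    · have hD := hblw k hk hb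
      have habs1 : |f k - τ| = τ - f k := by
        rw [abs_of_neg (by linarith : f k - τ < 0)]; ring
      rcases harm k hk hb with hl | hr
      · have habs2 : |f k + c - τ| = c - (τ - f k) := by
          rw [show f k + c - τ = c - (τ - f k) from by ring]
          exact abs_of_pos (by linarith)
        rw [habs1, habs2]
        constructor
        · linarith
        · linarith
      · have habs2 : |f k + c - τ| = (τ - f k) - c := by
          rw [show f k + c - τ = -((τ - f k) - c) from by ring, abs_neg]
          exact abs_of_pos (by linarith)
        rw [habs1, habs2]
        constructor
        · linarith
        · linarith
    · have hD := habv k hk ha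
      have habs1 : |f k - τ| = f k - τ := abs_of_pos (by linarith)
      have habs2 : |f k + c - τ| = (f k - τ) + c := by
        rw [show f k + c - τ = (f k - τ) + c from by ring]
        exact abs_of_pos (by linarith)
      rw [habs1, habs2]
      constructor
      · linarith
      · linarith

end CP

-- Structural lemma for the concave setting (Lemma 7).
open CP in
theorem concave_perturbation
    (K : ℕ) (hK : 3 ≤ K) (τ : ℝ) (μ : Fin K → ℝ) (hconc : ConcaveSeq μ)
    (hne : ∀ k, μ k ≠ τ) (habove : ∃ l, τ < μ l) :
    ∃ μ' : Fin K → ℝ,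
      ConcaveSeq μ' ∧
      (∃ k, Real.sign (μ k - τ) ≠ Real.sign (μ' k - τ)) ∧
      (∀ k, |μ' k - μ k| ≤ 3 * (⨅ j, |μ j - τ|)) ∧
      (∀ k, |μ k - τ| / 10 ≤ |μ' k - τ| ∧ |μ' k - τ| ≤ 3 * |μ k - τ|) := by
  classical
  haveI : Nonempty (Fin K) := ⟨⟨0, by omega⟩⟩
  obtain ⟨m, hm0⟩ := Finite.exists_min (fun j : Fin K => |μ j - τ|)
  have hm : ∀ b : Fin K, |μ m - τ| ≤ |μ b - τ| := hm0
  set ε := |μ m - τ| with hε_def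
  have hεpos : 0 < ε := abs_pos.mpr (sub_ne_zero.mpr (hne m))
  have hInf : (⨅ j, |μ j - τ|) = ε := by
    apply le_antisymm
    · exact ciInf_le (Set.finite_range _).bddBelow m
    · exact le_ciInf hm
  rw [hInf]
  obtain ⟨f, hfn⟩ : ∃ f : ℕ → ℝ, ∀ (i : ℕ) (h : i < K), f i = μ ⟨i, h⟩ :=
    ⟨fun i => if h : i < K then μ ⟨i, h⟩ else 0, fun i h => dif_pos h⟩
  have hfι : ∀ k : Fin K, f (k : ℕ) = μ k := by
    intro k
    rw [hfn k k.isLt]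
  have hcf : ∀ i, i + 2 < K → f i + f (i + 2) ≤ 2 * f (i + 1) := by
    intro i h
    rw [hfn i (by omega), hfn (i+2) h, hfn (i+1) (by omega)]
    exact hconc i h
  have hne' : ∀ i, i < K → f i ≠ τ := fun i hi => by rw [hfn i hi]; exact hne ⟨i, hi⟩
  have hεle : ∀ i, i < K → ε ≤ |f i - τ| := fun i hi => by rw [hfn i hi]; exact hm ⟨i, hi⟩
  have hblw : ∀ k, k < K → f k < τ → ε ≤ τ - f k := by
    intro k hk h
    have h2 := hεle k hk
    rw [abs_of_neg (by linarith : f k - τ < 0)] at h2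
    linarith
  have habv : ∀ k, k < K → τ < f k → ε ≤ f k - τ := by
    intro k hk h
    have h2 := hεle k hk
    rwa [abs_of_pos (by linarith : 0 < f k - τ)] at h2
  obtain ⟨p0, hp0⟩ := habove
  have hpK : (p0 : ℕ) < K := p0.isLt
  have hpa : τ < f (p0 : ℕ) := by rw [hfι p0]; exact hp0
  suffices hpack : ∃ g : ℕ → ℝ,
      (∀ i, i + 2 < K → g i + g (i + 2) ≤ 2 * g (i + 1)) ∧
      (∃ kw, kw < K ∧ (f kw - τ) * (g kw - τ) < 0) ∧
      (∀ k, k < K → |g k - f k| ≤ 3 * ε) ∧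
      (∀ k, k < K → |f k - τ| / 10 ≤ |g k - τ| ∧ |g k - τ| ≤ 3 * |f k - τ|) by
    obtain ⟨g, p1, ⟨kw, hkwK, hkflip⟩, p3, p4⟩ := hpack
    refine ⟨fun k => g (k : ℕ), ?_, ⟨⟨kw, hkwK⟩, ?_⟩, ?_, ?_⟩
    · intro i h
      exact p1 i h
    · show Real.sign (μ ⟨kw, hkwK⟩ - τ) ≠ Real.sign (g kw - τ)
      apply sign_ne_of_mul_neg
      rw [← hfι ⟨kw, hkwK⟩]
      exact hkflip
    · intro k
      show |g (k : ℕ) - μ k| ≤ 3 * ε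
      rw [← hfι k]
      exact p3 k k.isLt
    · intro k
      constructor
      · show |μ k - τ| / 10 ≤ |g (k : ℕ) - τ|
        rw [← hfι k]
        exact (p4 k k.isLt).1
      · show |g (k : ℕ) - τ| ≤ 3 * |μ k - τ|
        rw [← hfι k]
        exact (p4 k k.isLt).2
  rcases lt_or_gt_of_ne (hne' (m : ℕ) m.isLt) with hMb | hMa
  · -- CASE B : the minimal-gap arm is below τ; shift everything up.
    have hMv : f (m : ℕ) = τ - ε := by
      have h3 : ε = |f (m : ℕ) - τ| := by rw [hfι m]
      rw [abs_of_neg (by linarith : f (m:ℕ) - τ < 0)] at h3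
      linarith
    by_cases hB : ∃ k, k < K ∧ f k < τ ∧ k ≠ (m : ℕ) ∧ τ - f k < 3/2 * ε
    · obtain ⟨k₀, hk0K, hk0b, hk0M, hk0s⟩ := hB
      have hy1 : ε ≤ τ - f k₀ := hblw k₀ hk0K hk0b
      have hthree : ∀ k, k < K → f k < τ → k ≠ (m : ℕ) → k ≠ k₀ → 3 * ε ≤ τ - f k := by
        intro k hk hkb hkm hkk0
        by_contra hcon
        push_neg at hcon
        exact no_three_small' hcf hne' hblw habv hεpos hpK hpa
          (x := (m : ℕ)) (y := k₀) (z := k)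
          (fun h => hk0M h.symm) (fun h => hkm h.symm) (fun h => hkk0 h.symm)
          m.isLt hk0K hk (by linarith) hk0b hkb (by linarith) (by linarith) hcon
      obtain ⟨g, p1, p2, p3, p4⟩ :=
        shift_pack (c := 11/10 * (τ - f k₀)) hcf hεpos m.isLt hMv hne'
          (by linarith) (by linarith)
          (by
            intro k hk hkb
            by_cases hkm : k = (m : ℕ)
            · left
              rw [hkm, hMv]
              have h5 : τ - (τ - ε) = ε := by ring
              rw [h5]
              linarith
            · by_cases hkk0 : k = k₀
              · left; rw [hkk0]
              · right
                have := hthree k hk hkb hkm hkk0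
                linarith)
          hblw habv
      exact ⟨g, p1, ⟨(m : ℕ), m.isLt, p2⟩, p3, p4⟩
    · push_neg at hB
      obtain ⟨g, p1, p2, p3, p4⟩ :=
        shift_pack (c := 11/10 * ε) hcf hεpos m.isLt hMv hne'
          le_rfl (by linarith)
          (by
            intro k hk hkb
            by_cases hkm : k = (m : ℕ)
            · left
              rw [hkm, hMv, show τ - (τ - ε) = ε from by ring]
            · right
              have := hB k hk hkb hkm
              linarith)
          hblw habv
      exact ⟨g, p1, ⟨(m : ℕ), m.isLt, p2⟩, p3, p4⟩
  · -- CASE A : the minimal-gap arm is above τ.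
    have hMv : f (m : ℕ) = τ + ε := by
      have h3 : ε = |f (m : ℕ) - τ| := by rw [hfι m]
      rw [abs_of_pos (by linarith : 0 < f (m:ℕ) - τ)] at h3
      linarith
    set S := (Finset.range K).filter (fun i => f i = τ + ε) with hS_def
    have hSne : S.Nonempty :=
      ⟨(m : ℕ), Finset.mem_filter.mpr ⟨Finset.mem_range.mpr m.isLt, hMv⟩⟩
    obtain ⟨e, heK, hfe, hemax⟩ :
        ∃ e, e < K ∧ f e = τ + ε ∧ ∀ i, i < K → f i = τ + ε → i ≤ e := by
      refine ⟨S.max' hSne, ?_, ?_, ?_⟩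
      · exact Finset.mem_range.mp (Finset.mem_filter.mp (S.max'_mem hSne)).1
      · exact (Finset.mem_filter.mp (S.max'_mem hSne)).2
      · intro i h1 h2
        exact Finset.le_max' S i (Finset.mem_filter.mpr ⟨Finset.mem_range.mpr h1, h2⟩)
    by_cases heK1 : e + 1 < K
    · rcases lt_or_gt_of_ne (hne' (e + 1) heK1) with hlt | hgt
      · -- LINE-R : cap with the line through (e, f e) and (e+1, f (e+1)), shifted down 2ε
        have hx : ε ≤ τ - f (e + 1) := hblw _ heK1 hlt
        have hbneg : f (e + 1) - f e ≤ -(2 * ε) := by rw [hfe]; linarith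
        obtain ⟨g, p1, p2, p3, p4⟩ :=
          line_pack (a := f e - (e:ℝ) * (f (e+1) - f e) - 2*ε) (b := f (e+1) - f e)
            hcf hεpos heK hfe
            (by rw [hfe]; ring)
            (by
              intro k hk
              have heq : f e - (e:ℝ)*(f (e+1) - f e) - 2*ε + (k:ℝ)*(f (e+1) - f e) + 2*ε
                  = f e + ((k:ℝ) - e)*(f (e+1) - f e) := by ring
              rcases le_total k e with h | h
              · have := chord_left hcf h heK1
                linarith
              · have := chord_right hcf h heK1 hk
                linarith)
            (by
              intro k hk hke
              rcases lt_or_gt_of_ne hke with h | h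
              · left
                have h1 : (k:ℝ) + 1 ≤ (e:ℝ) := by exact_mod_cast h
                have h3 : 1 * (-(f (e+1) - f e)) ≤ ((e:ℝ) - k) * (-(f (e+1) - f e)) :=
                  mul_le_mul_of_nonneg_right (by linarith) (by linarith)
                have heq : f e - (e:ℝ)*(f (e+1) - f e) - 2*ε + (k:ℝ)*(f (e+1) - f e)
                    = f e - 2*ε + ((e:ℝ) - k) * (-(f (e+1) - f e)) := by ring
                linarith [hfe]
              · right
                have h1 : (e:ℝ) + 1 ≤ (k:ℝ) := by exact_mod_cast h
                have h3 : 1 * (-(f (e+1) - f e)) ≤ ((k:ℝ) - e) * (-(f (e+1) - f e)) :=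
                  mul_le_mul_of_nonneg_right (by linarith) (by linarith)
                constructor
                · have heq : f e - (e:ℝ)*(f (e+1) - f e) - 2*ε + (k:ℝ)*(f (e+1) - f e)
                      = f e - 2*ε - ((k:ℝ) - e) * (-(f (e+1) - f e)) := by ring
                  linarith [hfe]
                · have hc := chord_right hcf (le_of_lt h) heK1 hk
                  have heq2 : f e + ((k:ℝ) - e)*(f (e+1) - f e)
                      = f e - ((k:ℝ) - e) * (-(f (e+1) - f e)) := by ring
                  linarith [hfe])
        exact ⟨g, p1, ⟨e, heK, p2⟩, p3, p4⟩
      · -- f (e+1) > τ, in fact > τ + ε by maximality of e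
        have h4 : τ + ε < f (e + 1) := by
          have h5 := habv (e+1) heK1 hgt
          rcases eq_or_lt_of_le (show τ + ε ≤ f (e+1) by linarith) with h6 | h6
          · exfalso
            have := hemax (e+1) heK1 h6.symm
            omega
          · exact h6
        by_cases he0 : e = 0
        · -- SPIKE-L
          obtain ⟨g, p1, p2, p3, p4⟩ := spike_pack hcf hεpos heK hfe (by intro i hi; omega)
          exact ⟨g, p1, ⟨e, heK, p2⟩, p3, p4⟩
        · -- LINE-L : cap with line through (e-1, f (e-1)) and (e, f e), shifted down 2ε
          obtain ⟨r, rfl⟩ : ∃ r, e = r + 1 := ⟨e - 1, by omega⟩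
          have hrK : r + 1 < K := heK
          have hcc := hcf r (by omega)
          have hr2 : f (r + 1 + 1) = f (r + 2) := rfl
          have hjb : f r < τ := by
            rcases lt_or_gt_of_ne (hne' r (by omega)) with h | h
            · exact h
            · exfalso
              have h5 := habv r (by omega) h
              rw [hfe] at hcc
              linarith
          have hx : ε ≤ τ - f r := hblw r (by omega) hjb
          have hbpos : 2 * ε ≤ f (r+1) - f r := by rw [hfe]; linarith
          obtain ⟨g, p1, p2, p3, p4⟩ :=
            line_pack (a := f r - (r:ℝ) * (f (r+1) - f r) - 2*ε) (b := f (r+1) - f r)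
              hcf hεpos hrK hfe
              (by push_cast; rw [hfe]; ring)
              (by
                intro k hk
                have heq : f r - (r:ℝ)*(f (r+1) - f r) - 2*ε + (k:ℝ)*(f (r+1) - f r) + 2*ε
                    = f r + ((k:ℝ) - r)*(f (r+1) - f r) := by ring
                rcases le_total k r with h | h
                · have := chord_left hcf h hrK
                  linarith
                · have := chord_right hcf h hrK hk
                  linarith)
              (by
                intro k hk hke
                rcases lt_or_gt_of_ne hke with h | h
                · right
                  have h1 : (k:ℝ) ≤ (r:ℝ) := by exact_mod_cast (show k ≤ r by omega)
                  have hnp : ((k:ℝ) - r) * (f (r+1) - f r) ≤ 0 :=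
                    mul_nonpos_iff.mpr (Or.inr ⟨by linarith, by linarith⟩)
                  constructor
                  · have heq : f r - (r:ℝ)*(f (r+1) - f r) - 2*ε + (k:ℝ)*(f (r+1) - f r)
                        = f r - 2*ε + ((k:ℝ) - r)*(f (r+1) - f r) := by ring
                    linarith
                  · have hc := chord_left hcf (show k ≤ r by omega) hrK
                    linarith
                · left
                  have h1 : (r:ℝ) + 2 ≤ (k:ℝ) := by exact_mod_cast (show r + 2 ≤ k by omega)
                  have h3 : 2 * (f (r+1) - f r) ≤ ((k:ℝ) - r) * (f (r+1) - f r) :=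
                    mul_le_mul_of_nonneg_right (by linarith) (by linarith)
                  have heq : f r - (r:ℝ)*(f (r+1) - f r) - 2*ε + (k:ℝ)*(f (r+1) - f r)
                      = f r - 2*ε + ((k:ℝ) - r)*(f (r+1) - f r) := by ring
                  linarith [hfe])
          exact ⟨g, p1, ⟨r + 1, hrK, p2⟩, p3, p4⟩
    · -- SPIKE-R : e = K - 1
      obtain ⟨g, p1, p2, p3, p4⟩ := spike_pack hcf hεpos heK hfe (by intro i hi; omega)
      exact ⟨g, p1, ⟨e, heK, p2⟩, p3, p4⟩
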